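/- Let g(F) = ½‖B − FF^⊤B‖²_F + (λ/2)‖FF^⊤‖²_F for B ∈ ℝ^{n×m}, F ∈ ℝ^{n×k}, λ ≥ 0. Then the gradient of g with respect to F is ∇g(F) = −2BB^⊤F + FF^⊤BB^⊤F + BB^⊤FF^⊤F + 2λFF^⊤F. -/

import Mathlib

open Matrix Finset

private lemma sum_sq_deriv_helper {n m : ℕ} (M X : Matrix (Fin n) (Fin m) ℝ) :
    ∑ a, ∑ b, M a b * X a b = Matrix.trace (M * Xᵀ) := by
  simp [Matrix.trace, Matrix.mul_apply, Matrix.diag]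

private lemma trace_mul_stdBasisT {n k : ℕ} (i : Fin n) (j : Fin k)
    (X : Matrix (Fin n) (Fin k) ℝ) :
    Matrix.trace (X * (Matrix.single i j (1:ℝ))ᵀ) = X i j := by
  simp [Matrix.trace, Matrix.mul_apply, Matrix.diag, Matrix.single,
    Matrix.of_apply, ite_and]

private lemma trace_mul_stdBasis {n k : ℕ} (i : Fin n) (j : Fin k)
    (X : Matrix (Fin k) (Fin n) ℝ) :
    Matrix.trace (X * Matrix.single i j (1:ℝ)) = X j i := by
  simp [Matrix.trace, Matrix.mul_apply, Matrix.diag, Matrix.single,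
    Matrix.of_apply, ite_and]

/-- The P-NMF objective `g(F) = ½‖B − F Fᵀ B‖²_F + (λ/2)‖F Fᵀ‖²_F`. -/
noncomputable def pnmfObj {n m k : ℕ} (B : Matrix (Fin n) (Fin m) ℝ) (lam : ℝ)
    (F : Matrix (Fin n) (Fin k) ℝ) : ℝ :=
  (1 / 2) * (∑ i, ∑ j, ((B - F * Fᵀ * B) i j) ^ 2) +
    (lam / 2) * (∑ i, ∑ j, ((F * Fᵀ) i j) ^ 2)

theorem stmt_16 {n m k : ℕ} (B : Matrix (Fin n) (Fin m) ℝ) (lam : ℝ)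
    (F : Matrix (Fin n) (Fin k) ℝ) :
    ∀ (i : Fin n) (j : Fin k),
      HasDerivAt (fun t : ℝ => pnmfObj B lam (F + t • Matrix.single i j 1))
        (((-2 : ℝ) • (B * Bᵀ * F) + F * Fᵀ * B * Bᵀ * F + B * Bᵀ * F * Fᵀ * F +
          (2 * lam) • (F * Fᵀ * F)) i j) 0 := by
  intro i j
  set E := Matrix.single i j (1:ℝ) with hE
  have hG : ∀ (a : Fin n) (c : Fin k),
      HasDerivAt (fun t : ℝ => (F + t • E) a c) (E a c) 0 := by
    intro a c
    simp only [Matrix.add_apply, Matrix.smul_apply, smul_eq_mul]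
    simpa using ((hasDerivAt_id (0:ℝ)).mul_const (E a c)).const_add (F a c)
  have hN : ∀ (a b : Fin n),
      HasDerivAt (fun t : ℝ => ((F + t • E) * (F + t • E)ᵀ) a b)
        ((E * Fᵀ + F * Eᵀ) a b) 0 := by
    intro a b
    simp only [Matrix.mul_apply, Matrix.transpose_apply, Matrix.add_apply,
      ← Finset.sum_add_distrib]
    refine HasDerivAt.fun_sum fun c _ => ?_
    simpa using (hG a c).fun_mul (hG b c)
  have hM : ∀ (a : Fin n) (b : Fin m),
      HasDerivAt (fun t : ℝ => (B - (F + t • E) * (F + t • E)ᵀ * B) a b)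
        (-(((E * Fᵀ + F * Eᵀ) * B) a b)) 0 := by
    intro a b
    have h : HasDerivAt (fun t : ℝ => ∑ p, ((F + t • E) * (F + t • E)ᵀ) a p * B p b)
        (((E * Fᵀ + F * Eᵀ) * B) a b) 0 := by
      rw [Matrix.mul_apply]
      exact HasDerivAt.fun_sum fun p _ => (hN a p).mul_const (B p b)
    simpa [Matrix.sub_apply, Matrix.mul_apply] using h.const_sub (B a b)
  have h1 : HasDerivAt
      (fun t : ℝ => ∑ a, ∑ b, ((B - (F + t • E) * (F + t • E)ᵀ * B) a b) ^ 2)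
      (∑ a, ∑ b, 2 * ((B - F * Fᵀ * B) a b) * (-(((E * Fᵀ + F * Eᵀ) * B) a b))) 0 := by
    refine HasDerivAt.fun_sum fun a _ => HasDerivAt.fun_sum fun b _ => ?_
    simpa using (hM a b).fun_pow 2
  have h2 : HasDerivAt
      (fun t : ℝ => ∑ a, ∑ b, (((F + t • E) * (F + t • E)ᵀ) a b) ^ 2)
      (∑ a, ∑ b, 2 * ((F * Fᵀ) a b) * ((E * Fᵀ + F * Eᵀ) a b)) 0 := by
    refine HasDerivAt.fun_sum fun a _ => HasDerivAt.fun_sum fun b _ => ?_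
    simpa using (hN a b).fun_pow 2
  have total := (h1.const_mul ((1:ℝ)/2)).fun_add (h2.const_mul (lam/2))
  simp only [pnmfObj]
  convert total using 2
  · rfl
  · rfl
  -- now prove the value equality
  have e1 : ∑ a, ∑ b, 2 * ((B - F * Fᵀ * B) a b) * (-(((E * Fᵀ + F * Eᵀ) * B) a b))
      = (-2) * ∑ a, ∑ b, ((B - F * Fᵀ * B) a b) * (((E * Fᵀ + F * Eᵀ) * B) a b) := by
    rw [Finset.mul_sum]
    refine Finset.sum_congr rfl fun a _ => ?_
    rw [Finset.mul_sum]
    exact Finset.sum_congr rfl fun b _ => by ring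
  have e2 : ∑ a, ∑ b, 2 * ((F * Fᵀ) a b) * ((E * Fᵀ + F * Eᵀ) a b)
      = 2 * ∑ a, ∑ b, ((F * Fᵀ) a b) * ((E * Fᵀ + F * Eᵀ) a b) := by
    rw [Finset.mul_sum]
    refine Finset.sum_congr rfl fun a _ => ?_
    rw [Finset.mul_sum]
    exact Finset.sum_congr rfl fun b _ => by ring
  rw [e1, e2, sum_sq_deriv_helper, sum_sq_deriv_helper]
  have t1 : Matrix.trace ((B - F * Fᵀ * B) * ((E * Fᵀ + F * Eᵀ) * B)ᵀ)
      = ((B - F * Fᵀ * B) * Bᵀ * F) i j + (Fᵀ * (B - F * Fᵀ * B) * Bᵀ) j i := by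
    have : ((E * Fᵀ + F * Eᵀ) * B)ᵀ = Bᵀ * (F * Eᵀ) + Bᵀ * (E * Fᵀ) := by
      simp [Matrix.transpose_mul, Matrix.mul_add]
    rw [this, Matrix.mul_add, Matrix.trace_add]
    congr 1
    · rw [← Matrix.mul_assoc, ← Matrix.mul_assoc]
      exact trace_mul_stdBasisT i j _
    · rw [← Matrix.mul_assoc, ← Matrix.mul_assoc, Matrix.trace_mul_comm,
        ← Matrix.mul_assoc, trace_mul_stdBasis i j, ← Matrix.mul_assoc]
  have t2 : Matrix.trace ((F * Fᵀ) * (E * Fᵀ + F * Eᵀ)ᵀ)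
      = (F * Fᵀ * F) i j + (Fᵀ * F * Fᵀ) j i := by
    have : (E * Fᵀ + F * Eᵀ)ᵀ = F * Eᵀ + E * Fᵀ := by
      simp [Matrix.transpose_mul]
    rw [this, Matrix.mul_add, Matrix.trace_add]
    congr 1
    · rw [← Matrix.mul_assoc]
      exact trace_mul_stdBasisT i j _
    · rw [← Matrix.mul_assoc, Matrix.trace_mul_comm, ← Matrix.mul_assoc,
        trace_mul_stdBasis i j, ← Matrix.mul_assoc]
  rw [t1, t2]
  have s1 : (B - F * Fᵀ * B) * Bᵀ * F = B * Bᵀ * F - F * Fᵀ * B * Bᵀ * F := by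
    rw [Matrix.sub_mul, Matrix.sub_mul]
  have s2 : (Fᵀ * (B - F * Fᵀ * B) * Bᵀ) j i
      = (B * Bᵀ * F) i j - (B * Bᵀ * F * Fᵀ * F) i j := by
    have := Matrix.transpose_apply (Fᵀ * (B - F * Fᵀ * B) * Bᵀ) i j
    rw [← this]
    have h3 : (Fᵀ * (B - F * Fᵀ * B) * Bᵀ)ᵀ = B * Bᵀ * F - B * Bᵀ * F * Fᵀ * F := by
      simp [Matrix.transpose_mul, Matrix.transpose_sub, Matrix.transpose_transpose,
        Matrix.sub_mul, Matrix.mul_sub, Matrix.mul_assoc]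
    rw [h3, Matrix.sub_apply]
  have s3 : (Fᵀ * F * Fᵀ) j i = (F * Fᵀ * F) i j := by
    have := Matrix.transpose_apply (Fᵀ * F * Fᵀ) i j
    rw [← this]
    have h4 : (Fᵀ * F * Fᵀ)ᵀ = F * Fᵀ * F := by
      simp [Matrix.transpose_mul, Matrix.mul_assoc]
    rw [h4]
  rw [s1, s2, s3]
  simp only [Matrix.add_apply, Matrix.sub_apply, Matrix.smul_apply, smul_eq_mul]
  ring
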